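/- Instantiation extension: if Γ ⊢ α̂ :≤ τ ⊣ Δ or Γ ⊢ τ ≤: α̂ ⊣ Δ, then Γ ⟶ Δ. -/

import Mathlib

set_option autoImplicit true

namespace DK

/-- Types, possibly containing existential type variables α̂:
    1 | α | α̂ | A → B | ∀α. A. -/
inductive ATy : Type where
  | unit : ATy
  | uvar : ℕ → ATy
  | evar : ℕ → ATy
  | arr : ATy → ATy → ATy
  | all : ℕ → ATy → ATy

/-- Monotypes: types containing no quantifiers. -/
def ATy.mono : ATy → Prop
  | .unit => True
  | .uvar _ => True
  | .evar _ => True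
  | .arr A B => A.mono ∧ B.mono
  | .all _ _ => False

/-- Free universal type variables. -/
def ATy.fvU : ATy → Finset ℕ
  | .unit => ∅
  | .uvar a => {a}
  | .evar _ => ∅
  | .arr A B => A.fvU ∪ B.fvU
  | .all a A => A.fvU.erase a

/-- Free existential type variables. -/
def ATy.fvE : ATy → Finset ℕ
  | .unit => ∅
  | .uvar _ => ∅
  | .evar a => {a}
  | .arr A B => A.fvE ∪ B.fvE
  | .all _ A => A.fvE

/-- `A.substE τ a` is [τ/α̂]A : substitution for the existential variable α̂ = a. -/
def ATy.substE : ATy → ATy → ℕ → ATy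
  | .unit, _, _ => .unit
  | .uvar b, _, _ => .uvar b
  | .evar b, τ, a => if b = a then τ else .evar b
  | .arr A B, τ, a => .arr (A.substE τ a) (B.substE τ a)
  | .all b A, τ, a => .all b (A.substE τ a)

/-- `A.substU τ a` is [τ/α]A : substitution for the universal variable α = a. -/
def ATy.substU : ATy → ATy → ℕ → ATy
  | .unit, _, _ => .unit
  | .uvar b, τ, a => if b = a then τ else .uvar b
  | .evar b, _, _ => .evar b
  | .arr A B, τ, a => .arr (A.substU τ a) (B.substU τ a)
  | .all b A, τ, a => .all b (if b = a then A else A.substU τ a)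

/-- Algorithmic context declarations: α, x:A, α̂, α̂=τ, ▸α̂. -/
inductive ADecl : Type where
  | tvar : ℕ → ADecl
  | var : ℕ → ATy → ADecl
  | evar : ℕ → ADecl
  | solved : ℕ → ATy → ADecl
  | marker : ℕ → ADecl

/-- Algorithmic contexts; the most recent declaration is the head
    (so "Γ, α̂" is `ADecl.evar α̂ :: Γ`). -/
abbrev ACtx := List ADecl

/-- [Γ]A : apply the context Γ as a substitution to A, recursively replacing each
    solved existential variable by its solution. -/
def applyCtx : ACtx → ATy → ATy
  | [], A => A
  | ADecl.solved a τ :: Γ, A => applyCtx Γ (A.substE τ a)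
  | _ :: Γ, A => applyCtx Γ A

/-- The existential variable a is declared (solved or unsolved) in Γ. -/
def ACtx.hasEvar (Γ : ACtx) (a : ℕ) : Prop :=
  ADecl.evar a ∈ Γ ∨ ∃ τ, ADecl.solved a τ ∈ Γ

/-- Well-formedness Γ ⊢ A: every universal variable of A is declared in Γ and
    every existential variable of A is declared (solved or unsolved) in Γ. -/
def AWf (Γ : ACtx) (A : ATy) : Prop :=
  (∀ a ∈ A.fvU, ADecl.tvar a ∈ Γ) ∧ (∀ a ∈ A.fvE, Γ.hasEvar a)

/-- Freshness: the name a is not declared in any way in Γ. -/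
def ACtx.fresh (Γ : ACtx) (a : ℕ) : Prop :=
  ADecl.tvar a ∉ Γ ∧ ADecl.evar a ∉ Γ ∧ (∀ τ, ADecl.solved a τ ∉ Γ) ∧
    ADecl.marker a ∉ Γ ∧ (∀ x A, ADecl.var x A ∈ Γ → x ≠ a)

/-- Context extension Γ ⟶ Δ. -/
inductive Extend : ACtx → ACtx → Prop where
  | nil : Extend [] []
  | var : Extend Γ Δ → applyCtx Δ A = applyCtx Δ A' →
      Extend (ADecl.var x A :: Γ) (ADecl.var x A' :: Δ)
  | tvar : Extend Γ Δ → Extend (ADecl.tvar a :: Γ) (ADecl.tvar a :: Δ)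
  | evar : Extend Γ Δ → Extend (ADecl.evar a :: Γ) (ADecl.evar a :: Δ)
  | solved : Extend Γ Δ → applyCtx Δ τ = applyCtx Δ τ' →
      Extend (ADecl.solved a τ :: Γ) (ADecl.solved a τ' :: Δ)
  | marker : Extend Γ Δ → Extend (ADecl.marker a :: Γ) (ADecl.marker a :: Δ)
  | solve : Extend Γ Δ → Extend (ADecl.evar a :: Γ) (ADecl.solved a τ :: Δ)
  | add : Extend Γ Δ → Extend Γ (ADecl.evar a :: Δ)
  | addSolved : Extend Γ Δ → Extend Γ (ADecl.solved a τ :: Δ)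

mutual
/-- Instantiation Γ ⊢ α̂ :≤ A ⊣ Δ. -/
inductive InstL : ACtx → ℕ → ATy → ACtx → Prop where
  | solve : ∀ {ΓL ΓR : ACtx} {a : ℕ} {τ : ATy}, ATy.mono τ → AWf ΓL τ →
      InstL (ΓR ++ ADecl.evar a :: ΓL) a τ (ΓR ++ ADecl.solved a τ :: ΓL)
  | reach : ∀ {Γ₂ Γ₁ Γ₀ : ACtx} {a b : ℕ},
      InstL (Γ₂ ++ ADecl.evar b :: Γ₁ ++ ADecl.evar a :: Γ₀) a (ATy.evar b)
        (Γ₂ ++ ADecl.solved b (ATy.evar a) :: Γ₁ ++ ADecl.evar a :: Γ₀)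
  | arr : ∀ {ΓL ΓR Θ Δ : ACtx} {a a₁ a₂ : ℕ} {A₁ A₂ : ATy},
      ACtx.fresh (ΓR ++ ADecl.evar a :: ΓL) a₁ →
      ACtx.fresh (ΓR ++ ADecl.evar a :: ΓL) a₂ → a₁ ≠ a₂ →
      InstR (ΓR ++ ADecl.solved a (ATy.arr (.evar a₁) (.evar a₂)) ::
             ADecl.evar a₁ :: ADecl.evar a₂ :: ΓL) A₁ a₁ Θ →
      InstL Θ a₂ (applyCtx Θ A₂) Δ →
      InstL (ΓR ++ ADecl.evar a :: ΓL) a (ATy.arr A₁ A₂) Δ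
  | allR : ∀ {Γ Δ Δ' : ACtx} {a b : ℕ} {B : ATy},
      ACtx.fresh Γ b →
      InstL (ADecl.tvar b :: Γ) a B (Δ' ++ ADecl.tvar b :: Δ) →
      InstL Γ a (ATy.all b B) Δ

/-- Instantiation Γ ⊢ A ≤: α̂ ⊣ Δ. -/
inductive InstR : ACtx → ATy → ℕ → ACtx → Prop where
  | solve : ∀ {ΓL ΓR : ACtx} {a : ℕ} {τ : ATy}, ATy.mono τ → AWf ΓL τ →
      InstR (ΓR ++ ADecl.evar a :: ΓL) τ a (ΓR ++ ADecl.solved a τ :: ΓL)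
  | reach : ∀ {Γ₂ Γ₁ Γ₀ : ACtx} {a b : ℕ},
      InstR (Γ₂ ++ ADecl.evar b :: Γ₁ ++ ADecl.evar a :: Γ₀) (ATy.evar b) a
        (Γ₂ ++ ADecl.solved b (ATy.evar a) :: Γ₁ ++ ADecl.evar a :: Γ₀)
  | arr : ∀ {ΓL ΓR Θ Δ : ACtx} {a a₁ a₂ : ℕ} {A₁ A₂ : ATy},
      ACtx.fresh (ΓR ++ ADecl.evar a :: ΓL) a₁ →
      ACtx.fresh (ΓR ++ ADecl.evar a :: ΓL) a₂ → a₁ ≠ a₂ →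
      InstL (ΓR ++ ADecl.solved a (ATy.arr (.evar a₁) (.evar a₂)) ::
             ADecl.evar a₁ :: ADecl.evar a₂ :: ΓL) a₁ A₁ Θ →
      InstR Θ (applyCtx Θ A₂) a₂ Δ →
      InstR (ΓR ++ ADecl.evar a :: ΓL) (ATy.arr A₁ A₂) a Δ
  | allL : ∀ {Γ Δ Δ' : ACtx} {a b bh : ℕ} {B : ATy},
      ACtx.fresh Γ bh →
      InstR (ADecl.evar bh :: ADecl.marker bh :: Γ)
        (B.substU (ATy.evar bh) b) a (Δ' ++ ADecl.marker bh :: Δ) →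
      InstR Γ (ATy.all b B) a Δ
end

/-- Algorithmic subtyping Γ ⊢ A <: B ⊣ Δ. -/
inductive ASub : ACtx → ATy → ATy → ACtx → Prop where
  | uvar : ADecl.tvar a ∈ Γ → ASub Γ (.uvar a) (.uvar a) Γ
  | unit : ASub Γ .unit .unit Γ
  | exvar : ADecl.evar a ∈ Γ → ASub Γ (.evar a) (.evar a) Γ
  | arr : ASub Γ B₁ A₁ Θ → ASub Θ (applyCtx Θ A₂) (applyCtx Θ B₂) Δ →
      ASub Γ (.arr A₁ A₂) (.arr B₁ B₂) Δ
  | allL : ACtx.fresh Γ ah →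
      ASub (ADecl.evar ah :: ADecl.marker ah :: Γ) (A.substU (.evar ah) a) B
        (Θ ++ ADecl.marker ah :: Δ) →
      ASub Γ (.all a A) B Δ
  | allR : ASub (ADecl.tvar b :: Γ) A B (Θ ++ ADecl.tvar b :: Δ) →
      ASub Γ A (.all b B) Δ
  | instL : ADecl.evar a ∈ Γ → a ∉ A.fvE → InstL Γ a A Δ →
      ASub Γ (.evar a) A Δ
  | instR : ADecl.evar a ∈ Γ → a ∉ A.fvE → InstR Γ A a Δ →
      ASub Γ A (.evar a) Δ

end DK

namespace DK

/-- A structural (syntactic) extension relation: Δ is Γ with some unsolved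
    existentials solved and some evar/solved declarations inserted, all other
    declarations kept verbatim. Unlike `Extend`, this is transitive. -/
inductive Ext0 : ACtx → ACtx → Prop where
  | nil : Ext0 [] []
  | keep : Ext0 Γ Δ → Ext0 (d :: Γ) (d :: Δ)
  | solve : Ext0 Γ Δ → Ext0 (ADecl.evar a :: Γ) (ADecl.solved a τ :: Δ)
  | add : Ext0 Γ Δ → Ext0 Γ (ADecl.evar a :: Δ)
  | addSolved : Ext0 Γ Δ → Ext0 Γ (ADecl.solved a τ :: Δ)

theorem ext0_refl : ∀ Γ : ACtx, Ext0 Γ Γ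
  | [] => .nil
  | _ :: Γ => .keep (ext0_refl Γ)

theorem ext0_trans : ∀ {Δ Θ : ACtx}, Ext0 Δ Θ → ∀ {Γ : ACtx}, Ext0 Γ Δ → Ext0 Γ Θ := by
  intro Δ Θ h2
  induction h2 with
  | nil => intro Γ h1; exact h1
  | keep h ih =>
    intro Γ h1
    cases h1 with
    | keep h1 => exact .keep (ih h1)
    | solve h1 => exact .solve (ih h1)
    | add h1 => exact .add (ih h1)
    | addSolved h1 => exact .addSolved (ih h1)
  | solve h ih =>
    intro Γ h1
    cases h1 with
    | keep h1 => exact .solve (ih h1)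
    | add h1 => exact .addSolved (ih h1)
  | add h ih => intro Γ h1; exact .add (ih h1)
  | addSolved h ih => intro Γ h1; exact .addSolved (ih h1)

theorem ext0_append : ∀ (L : ACtx) {Γ Δ : ACtx}, Ext0 Γ Δ → Ext0 (L ++ Γ) (L ++ Δ)
  | [], _, _, h => h
  | _ :: L, _, _, h => .keep (ext0_append L h)

theorem ext0_extend : ∀ {Γ Δ : ACtx}, Ext0 Γ Δ → Extend Γ Δ := by
  intro Γ Δ h
  induction h with
  | nil => exact .nil
  | keep h ih =>
    rename_i d
    cases d with
    | tvar => exact .tvar ih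
    | var => exact .var ih rfl
    | evar => exact .evar ih
    | solved => exact .solved ih rfl
    | marker => exact .marker ih
  | solve h ih => exact .solve ih
  | add h ih => exact .add ih
  | addSolved h ih => exact .addSolved ih

theorem ext0_tvar_mem : ∀ {Γ Δ : ACtx}, Ext0 Γ Δ → ∀ {b}, ADecl.tvar b ∈ Δ → ADecl.tvar b ∈ Γ := by
  intro Γ Δ h
  induction h with
  | nil => intro b hb; exact hb
  | keep h ih =>
    intro b hb
    rcases List.mem_cons.1 hb with hb | hb
    · exact hb ▸ List.mem_cons_self
    · exact List.mem_cons_of_mem _ (ih hb)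
  | solve h ih =>
    intro b hb
    rcases List.mem_cons.1 hb with hb | hb
    · cases hb
    · exact List.mem_cons_of_mem _ (ih hb)
  | add h ih =>
    intro b hb
    rcases List.mem_cons.1 hb with hb | hb
    · cases hb
    · exact ih hb
  | addSolved h ih =>
    intro b hb
    rcases List.mem_cons.1 hb with hb | hb
    · cases hb
    · exact ih hb

theorem ext0_marker_mem : ∀ {Γ Δ : ACtx}, Ext0 Γ Δ → ∀ {b}, ADecl.marker b ∈ Δ → ADecl.marker b ∈ Γ := by
  intro Γ Δ h
  induction h with
  | nil => intro b hb; exact hb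
  | keep h ih =>
    intro b hb
    rcases List.mem_cons.1 hb with hb | hb
    · exact hb ▸ List.mem_cons_self
    · exact List.mem_cons_of_mem _ (ih hb)
  | solve h ih =>
    intro b hb
    rcases List.mem_cons.1 hb with hb | hb
    · cases hb
    · exact List.mem_cons_of_mem _ (ih hb)
  | add h ih =>
    intro b hb
    rcases List.mem_cons.1 hb with hb | hb
    · cases hb
    · exact ih hb
  | addSolved h ih =>
    intro b hb
    rcases List.mem_cons.1 hb with hb | hb
    · cases hb
    · exact ih hb

theorem ext0_strip_tvar : ∀ {G Ω : ACtx}, Ext0 G Ω →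
    ∀ {b : ℕ} {Γ Δ' Δ : ACtx}, G = ADecl.tvar b :: Γ → Ω = Δ' ++ ADecl.tvar b :: Δ →
    ADecl.tvar b ∉ Γ → Ext0 Γ Δ := by
  intro G Ω h
  induction h with
  | nil =>
    intro b Γ Δ' Δ hG hΩ hb
    exact absurd hΩ.symm (List.append_ne_nil_of_right_ne_nil _ (by simp))
  | keep h ih =>
    intro b Γ Δ' Δ hG hΩ hb
    cases hG
    cases Δ' with
    | nil =>
      simp only [List.nil_append, List.cons.injEq] at hΩ
      exact hΩ.2 ▸ h
    | cons e Δ'' =>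
      simp only [List.cons_append, List.cons.injEq] at hΩ
      exfalso
      apply hb
      apply ext0_tvar_mem h
      rw [hΩ.2]
      simp
  | solve h ih =>
    intro b Γ Δ' Δ hG hΩ hb
    cases hG
  | add h ih =>
    intro b Γ Δ' Δ hG hΩ hb
    cases Δ' with
    | nil => simp only [List.nil_append, List.cons.injEq] at hΩ; cases hΩ.1
    | cons e Δ'' =>
      simp only [List.cons_append, List.cons.injEq] at hΩ
      exact ih hG hΩ.2 hb
  | addSolved h ih =>
    intro b Γ Δ' Δ hG hΩ hb
    cases Δ' with
    | nil => simp only [List.nil_append, List.cons.injEq] at hΩ; cases hΩ.1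
    | cons e Δ'' =>
      simp only [List.cons_append, List.cons.injEq] at hΩ
      exact ih hG hΩ.2 hb

theorem ext0_strip_marker : ∀ {G Ω : ACtx}, Ext0 G Ω →
    ∀ {b : ℕ} {Γ Δ' Δ : ACtx}, G = ADecl.marker b :: Γ → Ω = Δ' ++ ADecl.marker b :: Δ →
    ADecl.marker b ∉ Γ → Ext0 Γ Δ := by
  intro G Ω h
  induction h with
  | nil =>
    intro b Γ Δ' Δ hG hΩ hb
    exact absurd hΩ.symm (List.append_ne_nil_of_right_ne_nil _ (by simp))
  | keep h ih =>
    intro b Γ Δ' Δ hG hΩ hb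
    cases hG
    cases Δ' with
    | nil =>
      simp only [List.nil_append, List.cons.injEq] at hΩ
      exact hΩ.2 ▸ h
    | cons e Δ'' =>
      simp only [List.cons_append, List.cons.injEq] at hΩ
      exfalso
      apply hb
      apply ext0_marker_mem h
      rw [hΩ.2]
      simp
  | solve h ih =>
    intro b Γ Δ' Δ hG hΩ hb
    cases hG
  | add h ih =>
    intro b Γ Δ' Δ hG hΩ hb
    cases Δ' with
    | nil => simp only [List.nil_append, List.cons.injEq] at hΩ; cases hΩ.1
    | cons e Δ'' =>
      simp only [List.cons_append, List.cons.injEq] at hΩ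
      exact ih hG hΩ.2 hb
  | addSolved h ih =>
    intro b Γ Δ' Δ hG hΩ hb
    cases Δ' with
    | nil => simp only [List.nil_append, List.cons.injEq] at hΩ; cases hΩ.1
    | cons e Δ'' =>
      simp only [List.cons_append, List.cons.injEq] at hΩ
      exact ih hG hΩ.2 hb

theorem ext0_strip_marker_evar : ∀ {G Ω : ACtx}, Ext0 G Ω →
    ∀ {c : ℕ} {Γ Δ' Δ : ACtx}, G = ADecl.evar c :: ADecl.marker c :: Γ →
    Ω = Δ' ++ ADecl.marker c :: Δ → ADecl.marker c ∉ Γ → Ext0 Γ Δ := by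
  intro G Ω h
  induction h with
  | nil =>
    intro c Γ Δ' Δ hG hΩ hc
    exact absurd hΩ.symm (List.append_ne_nil_of_right_ne_nil _ (by simp))
  | keep h ih =>
    intro c Γ Δ' Δ hG hΩ hc
    cases hG
    cases Δ' with
    | nil => simp only [List.nil_append, List.cons.injEq] at hΩ; cases hΩ.1
    | cons e Δ'' =>
      simp only [List.cons_append, List.cons.injEq] at hΩ
      exact ext0_strip_marker h rfl hΩ.2 hc
  | solve h ih =>
    intro c Γ Δ' Δ hG hΩ hc
    injection hG with h1 h2
    cases h1
    cases h2
    cases Δ' with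
    | nil => simp only [List.nil_append, List.cons.injEq] at hΩ; cases hΩ.1
    | cons e Δ'' =>
      simp only [List.cons_append, List.cons.injEq] at hΩ
      exact ext0_strip_marker h rfl hΩ.2 hc
  | add h ih =>
    intro c Γ Δ' Δ hG hΩ hc
    cases Δ' with
    | nil => simp only [List.nil_append, List.cons.injEq] at hΩ; cases hΩ.1
    | cons e Δ'' =>
      simp only [List.cons_append, List.cons.injEq] at hΩ
      exact ih hG hΩ.2 hc
  | addSolved h ih =>
    intro c Γ Δ' Δ hG hΩ hc
    cases Δ' with
    | nil => simp only [List.nil_append, List.cons.injEq] at hΩ; cases hΩ.1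
    | cons e Δ'' =>
      simp only [List.cons_append, List.cons.injEq] at hΩ
      exact ih hG hΩ.2 hc

theorem instL_ext0 : ∀ {Γ : ACtx} {a : ℕ} {τ : ATy} {Δ : ACtx}, InstL Γ a τ Δ → Ext0 Γ Δ := by
  intro Γ a τ Δ h
  refine InstL.rec (motive_1 := fun Γ a τ Δ _ => Ext0 Γ Δ)
    (motive_2 := fun Γ τ a Δ _ => Ext0 Γ Δ)
    ?_ ?_ ?_ ?_ ?_ ?_ ?_ ?_ h
  · intro ΓL ΓR a τ _ _
    exact ext0_append ΓR (.solve (ext0_refl ΓL))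
  · intro Γ₂ Γ₁ Γ₀ a b
    simp only [List.append_assoc, List.cons_append]
    exact ext0_append Γ₂ (.solve (ext0_refl (Γ₁ ++ ADecl.evar a :: Γ₀)))
  · intro ΓL ΓR Θ Δ a a₁ a₂ A₁ A₂ _ _ _ _ _ ih1 ih2
    exact ext0_trans ih2 (ext0_trans ih1
      (ext0_append ΓR (.solve (.add (.add (ext0_refl ΓL))))))
  · intro Γ Δ Δ' a b B hfresh _ ih
    exact ext0_strip_tvar ih rfl rfl hfresh.1
  · intro ΓL ΓR a τ _ _
    exact ext0_append ΓR (.solve (ext0_refl ΓL))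
  · intro Γ₂ Γ₁ Γ₀ a b
    simp only [List.append_assoc, List.cons_append]
    exact ext0_append Γ₂ (.solve (ext0_refl (Γ₁ ++ ADecl.evar a :: Γ₀)))
  · intro ΓL ΓR Θ Δ a a₁ a₂ A₁ A₂ _ _ _ _ _ ih1 ih2
    exact ext0_trans ih2 (ext0_trans ih1
      (ext0_append ΓR (.solve (.add (.add (ext0_refl ΓL))))))
  · intro Γ Δ Δ' a b bh B hfresh _ ih
    exact ext0_strip_marker_evar ih rfl rfl hfresh.2.2.2.1

theorem instR_ext0 : ∀ {Γ : ACtx} {τ : ATy} {a : ℕ} {Δ : ACtx}, InstR Γ τ a Δ → Ext0 Γ Δ := by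
  intro Γ τ a Δ h
  refine InstR.rec (motive_1 := fun Γ a τ Δ _ => Ext0 Γ Δ)
    (motive_2 := fun Γ τ a Δ _ => Ext0 Γ Δ)
    ?_ ?_ ?_ ?_ ?_ ?_ ?_ ?_ h
  · intro ΓL ΓR a τ _ _
    exact ext0_append ΓR (.solve (ext0_refl ΓL))
  · intro Γ₂ Γ₁ Γ₀ a b
    simp only [List.append_assoc, List.cons_append]
    exact ext0_append Γ₂ (.solve (ext0_refl (Γ₁ ++ ADecl.evar a :: Γ₀)))
  · intro ΓL ΓR Θ Δ a a₁ a₂ A₁ A₂ _ _ _ _ _ ih1 ih2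
    exact ext0_trans ih2 (ext0_trans ih1
      (ext0_append ΓR (.solve (.add (.add (ext0_refl ΓL))))))
  · intro Γ Δ Δ' a b B hfresh _ ih
    exact ext0_strip_tvar ih rfl rfl hfresh.1
  · intro ΓL ΓR a τ _ _
    exact ext0_append ΓR (.solve (ext0_refl ΓL))
  · intro Γ₂ Γ₁ Γ₀ a b
    simp only [List.append_assoc, List.cons_append]
    exact ext0_append Γ₂ (.solve (ext0_refl (Γ₁ ++ ADecl.evar a :: Γ₀)))
  · intro ΓL ΓR Θ Δ a a₁ a₂ A₁ A₂ _ _ _ _ _ ih1 ih2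
    exact ext0_trans ih2 (ext0_trans ih1
      (ext0_append ΓR (.solve (.add (.add (ext0_refl ΓL))))))
  · intro Γ Δ Δ' a b bh B hfresh _ ih
    exact ext0_strip_marker_evar ih rfl rfl hfresh.2.2.2.1

/-- Instantiation extension: if Γ ⊢ α̂ :≤ τ ⊣ Δ or Γ ⊢ τ ≤: α̂ ⊣ Δ then Γ ⟶ Δ. -/
theorem instantiation_extension (Γ Δ : ACtx) (a : ℕ) (τ : ATy)
    (h : InstL Γ a τ Δ ∨ InstR Γ τ a Δ) : Extend Γ Δ := by
  rcases h with h | h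
  · exact ext0_extend (instL_ext0 h)
  · exact ext0_extend (instR_ext0 h)

end DK
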